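/- Combining the previous two results: with Ṽ = (v^{in}, v^{out}, v^{in}_1,…,v^{in}_s, v^{out}_1,…,v^{out}_s) (taking B = 2 primary branches, one input and one output), the system {Z̃_g·Ṽ = 0, W̃_g·Ṽ = 0} holds if and only if v^{in} = Σ_k v^{in}_k, v^{out} = Σ_k v^{out}_k, and v^{out}_k = η_k·v^{in}_k for all k; consequently v^{out} = Σ_k η_k·v^{in}_k. -/

import Mathlib

open Matrix Finset

theorem pwl_siso_combined_model (s : ℕ) (η : Fin s → ℝ)
    (Z : Matrix (Fin s) (Fin 2 ⊕ (Fin s ⊕ Fin s)) ℝ)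
    (hZ : ∀ p q, Z p q =
      match q with
      | Sum.inl _ => 0
      | Sum.inr (Sum.inl k) => if p = k then η p else 0
      | Sum.inr (Sum.inr k) => if p = k then -1 else 0)
    (Wt : Matrix (Fin 2) (Fin 2 ⊕ (Fin s ⊕ Fin s)) ℝ)
    (hWt : ∀ i q, Wt i q =
      match i, q with
      | ⟨0, _⟩, Sum.inl ⟨0, _⟩ => -1
      | ⟨1, _⟩, Sum.inl ⟨1, _⟩ => -1
      | ⟨0, _⟩, Sum.inr (Sum.inl _) => 1
      | ⟨1, _⟩, Sum.inr (Sum.inr _) => 1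
      | _, _ => 0)
    (Vt : Fin 2 ⊕ (Fin s ⊕ Fin s) → ℝ) :
    ((Z.mulVec Vt = 0 ∧ Wt.mulVec Vt = 0) ↔
      (Vt (Sum.inl 0) = ∑ k : Fin s, Vt (Sum.inr (Sum.inl k)) ∧
        Vt (Sum.inl 1) = ∑ k : Fin s, Vt (Sum.inr (Sum.inr k)) ∧
        ∀ k : Fin s,
          Vt (Sum.inr (Sum.inr k)) = η k * Vt (Sum.inr (Sum.inl k)))) ∧
    (Z.mulVec Vt = 0 ∧ Wt.mulVec Vt = 0 →
      Vt (Sum.inl 1) = ∑ k : Fin s, η k * Vt (Sum.inr (Sum.inl k))) := by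
  have hZrow : ∀ p, Z.mulVec Vt p
      = η p * Vt (Sum.inr (Sum.inl p)) - Vt (Sum.inr (Sum.inr p)) := by
    intro p
    simp [mulVec, dotProduct, Fintype.sum_sum_type, hZ, ite_mul,
      Finset.sum_ite_eq, sub_eq_add_neg]
  have hW0 : Wt.mulVec Vt 0
      = -Vt (Sum.inl 0) + ∑ k : Fin s, Vt (Sum.inr (Sum.inl k)) := by
    simp [mulVec, dotProduct, Fintype.sum_sum_type, hWt, Fin.sum_univ_two]
    change (-1 : ℝ) * _ + ∑ a, (1 : ℝ) * Vt (Sum.inr (Sum.inl a)) = _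
    simp
  have hW1 : Wt.mulVec Vt 1
      = -Vt (Sum.inl 1) + ∑ k : Fin s, Vt (Sum.inr (Sum.inr k)) := by
    simp [mulVec, dotProduct, Fintype.sum_sum_type, hWt, Fin.sum_univ_two]
    change (-1 : ℝ) * _ + ∑ a, (1 : ℝ) * Vt (Sum.inr (Sum.inr a)) = _
    simp
  have main : (Z.mulVec Vt = 0 ∧ Wt.mulVec Vt = 0) ↔
      (Vt (Sum.inl 0) = ∑ k : Fin s, Vt (Sum.inr (Sum.inl k)) ∧
        Vt (Sum.inl 1) = ∑ k : Fin s, Vt (Sum.inr (Sum.inr k)) ∧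
        ∀ k : Fin s,
          Vt (Sum.inr (Sum.inr k)) = η k * Vt (Sum.inr (Sum.inl k))) := by
    constructor
    · rintro ⟨hZ0, hW⟩
      refine ⟨?_, ?_, fun k => ?_⟩
      · have := congrFun hW 0; rw [hW0] at this; simp at this; linarith [this]
      · have := congrFun hW 1; rw [hW1] at this; simp at this; linarith [this]
      · have := congrFun hZ0 k; rw [hZrow] at this; simp at this; linarith [this]
    · rintro ⟨h0, h1, hk⟩
      constructor
      · funext p; rw [hZrow]; simp [hk p]
      · funext i
        fin_cases i
        · show (Wt *ᵥ Vt) 0 = (0 : Fin 2 → ℝ) 0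
          rw [hW0]; simp [h0]
        · show (Wt *ᵥ Vt) 1 = (0 : Fin 2 → ℝ) 1
          rw [hW1]; simp [h1]
  refine ⟨main, fun h => ?_⟩
  obtain ⟨h0, h1, hk⟩ := main.mp h
  rw [h1]
  exact Finset.sum_congr rfl fun k _ => hk k
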